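/- Let t ∈ ℂ \ {0,1}, a₁=(1,0)ᵀ, a₂=(0,1)ᵀ, a₃=(1,1)ᵀ, a₄=(t,1)ᵀ ∈ ℂ², and φ₁=(1,0,0,1)ᵀ, φ₂=(1,0,0,−1)ᵀ, φ₃=(0,1,1,0)ᵀ, φ₄=(0,1,−1,0)ᵀ ∈ ℂ⁴. Set eᵢ = aᵢ⊗φᵢ ∈ ℂ⁸ and ρ = |t²−t|·e₁e₁† + |t−1|·e₂e₂† + |t|·e₃e₃† + e₄e₄†. Then the partial transpose ρ^{T₂} of ρ on the second qubit is positive semidefinite. -/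

import Mathlib

open Matrix
open scoped ComplexOrder

/-- The four vectors (1,0), (0,1), (1,1), (t,1). -/
def avecs (t : ℂ) : Fin 4 → Fin 2 → ℂ := ![![1, 0], ![0, 1], ![1, 1], ![t, 1]]

/-- The four (unnormalized) Bell vectors in ℂ² ⊗ ℂ². -/
noncomputable def phiv : Fin 4 → Fin 2 × Fin 2 → ℂ :=
  fun j p => (![!![1, 0; 0, 1], !![1, 0; 0, -1], !![0, 1; 1, 0], !![0, 1; -1, 0]] j) p.1 p.2

/-- The bipartite product vectors eᵢ = aᵢ ⊗ φᵢ in ℂ² ⊗ (ℂ² ⊗ ℂ²). -/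
noncomputable def evec (t : ℂ) (i : Fin 4) : Fin 2 × Fin 2 × Fin 2 → ℂ :=
  fun p => avecs t i p.1 * phiv i p.2

/-- The weights λ₁ = |t²−t|, λ₂ = |t−1|, λ₃ = |t|, λ₄ = 1. -/
noncomputable def lam (t : ℂ) : Fin 4 → ℂ :=
  ![((‖t ^ 2 - t‖ : ℝ) : ℂ), ((‖t - 1‖ : ℝ) : ℂ), ((‖t‖ : ℝ) : ℂ), 1]

/-- The type-II state ρ(t) = Σ λᵢ eᵢeᵢ†. -/
noncomputable def rhoT (t : ℂ) : Matrix (Fin 2 × Fin 2 × Fin 2) (Fin 2 × Fin 2 × Fin 2) ℂ :=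
  ∑ i, lam t i • vecMulVec (evec t i) (star (evec t i))

/-- Partial transpose on the second qubit. -/
noncomputable def ptB (M : Matrix (Fin 2 × Fin 2 × Fin 2) (Fin 2 × Fin 2 × Fin 2) ℂ) :
    Matrix (Fin 2 × Fin 2 × Fin 2) (Fin 2 × Fin 2 × Fin 2) ℂ :=
  Matrix.of fun i j => M (i.1, j.2.1, i.2.2) (j.1, i.2.1, j.2.2)

/-- A Hermitian 2×2 matrix with nonnegative diagonal and zero determinant is PSD. -/
lemma psd2 (a d : ℝ) (b : ℂ) (ha : 0 ≤ a) (hd : 0 ≤ d)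
    (h : a * d = Complex.normSq b) :
    (!![(a : ℂ), b; (starRingEnd ℂ) b, (d : ℂ)]).PosSemidef := by
  rw [Matrix.posSemidef_iff_dotProduct_mulVec]
  constructor
  · ext i j
    fin_cases i <;> fin_cases j <;>
      simp [Matrix.conjTranspose_apply, Complex.conj_ofReal]
  · intro x
    have hQ : star x ⬝ᵥ (!![(a : ℂ), b; (starRingEnd ℂ) b, (d : ℂ)]) *ᵥ x =
        (starRingEnd ℂ) (x 0) * ((a : ℂ) * x 0 + b * x 1) +
        (starRingEnd ℂ) (x 1) * ((starRingEnd ℂ) b * x 0 + (d : ℂ) * x 1) := by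
      simp [Matrix.mulVec, dotProduct, Fin.sum_univ_two, Pi.star_apply,
        Complex.star_def]
      try ring
    rcases eq_or_lt_of_le ha with ha0 | hapos
    · have hb : b = 0 := by
        have : Complex.normSq b = 0 := by rw [← h, ← ha0]; ring
        exact Complex.normSq_eq_zero.mp this
      have hQ2 : star x ⬝ᵥ (!![(a : ℂ), b; (starRingEnd ℂ) b, (d : ℂ)]) *ᵥ x =
          ((d * Complex.normSq (x 1) : ℝ) : ℂ) := by
        rw [hQ, hb, ← ha0]
        rw [show ((d * Complex.normSq (x 1) : ℝ) : ℂ)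
            = (d : ℂ) * ((Complex.normSq (x 1) : ℝ) : ℂ) by push_cast; ring]
        rw [Complex.normSq_eq_conj_mul_self]
        simp only [map_zero]
        push_cast
        ring
      rw [hQ2, Complex.zero_le_real]
      exact mul_nonneg hd (Complex.normSq_nonneg _)
    · have hb2 : b * (starRingEnd ℂ) b = (a : ℂ) * (d : ℂ) := by
        rw [Complex.mul_conj, show Complex.normSq b = a * d from h.symm]
        push_cast
        ring
      have key : (a : ℂ) * (star x ⬝ᵥ (!![(a : ℂ), b; (starRingEnd ℂ) b, (d : ℂ)]) *ᵥ x) =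
          ((Complex.normSq ((a : ℂ) * x 0 + b * x 1) : ℝ) : ℂ) := by
        rw [hQ, show ((Complex.normSq ((a : ℂ) * x 0 + b * x 1) : ℝ) : ℂ)
            = ((a : ℂ) * x 0 + b * x 1) * (starRingEnd ℂ) ((a : ℂ) * x 0 + b * x 1) from
          (Complex.mul_conj _).symm]
        simp only [map_add, _root_.map_mul, Complex.conj_ofReal]
        linear_combination (-((starRingEnd ℂ) (x 1) * x 1)) * hb2
      have hane : (a : ℂ) ≠ 0 := by
        simp only [ne_eq, Complex.ofReal_eq_zero]; exact ne_of_gt hapos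
      have hQ3 : star x ⬝ᵥ (!![(a : ℂ), b; (starRingEnd ℂ) b, (d : ℂ)]) *ᵥ x =
          ((Complex.normSq ((a : ℂ) * x 0 + b * x 1) / a : ℝ) : ℂ) := by
        have hcast : ((Complex.normSq ((a : ℂ) * x 0 + b * x 1) / a : ℝ) : ℂ)
            = ((Complex.normSq ((a : ℂ) * x 0 + b * x 1) : ℝ) : ℂ) / (a : ℂ) := by
          push_cast; ring
        rw [hcast, ← key, mul_comm, mul_div_assoc, div_self hane, mul_one]
      rw [hQ3, Complex.zero_le_real]
      exact div_nonneg (Complex.normSq_nonneg _) (le_of_lt hapos)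

/-- Tensoring a PSD 2×2 matrix with a rank-one |c⟩⟨c| gives a PSD matrix. -/
lemma kron_psd (M : Matrix (Fin 2) (Fin 2) ℂ) (hM : M.PosSemidef)
    (c : Fin 2 × Fin 2 → ℂ) :
    (Matrix.of fun p q : Fin 2 × Fin 2 × Fin 2 =>
      M p.1 q.1 * c p.2 * (starRingEnd ℂ) (c q.2)).PosSemidef := by
  rw [Matrix.posSemidef_iff_dotProduct_mulVec]
  constructor
  · ext p q
    have hM1 : star (M q.1 p.1) = M p.1 q.1 := by
      have := congrFun (congrFun hM.1 p.1) q.1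
      simpa [Matrix.conjTranspose_apply] using this
    have hM1' : (starRingEnd ℂ) (M q.1 p.1) = M p.1 q.1 := by
      simpa [Complex.star_def] using hM1
    simp only [Matrix.conjTranspose_apply, Matrix.of_apply, star_mul', star_star,
      Complex.star_def, Complex.conj_conj]
    rw [← hM1']
    ring
  · intro x
    have hform : star x ⬝ᵥ (Matrix.of fun p q : Fin 2 × Fin 2 × Fin 2 =>
        M p.1 q.1 * c p.2 * (starRingEnd ℂ) (c q.2)) *ᵥ x =
        star (fun a : Fin 2 => ∑ m : Fin 2 × Fin 2, (starRingEnd ℂ) (c m) * x (a, m)) ⬝ᵥ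
          M *ᵥ (fun a : Fin 2 => ∑ m : Fin 2 × Fin 2, (starRingEnd ℂ) (c m) * x (a, m)) := by
      simp only [dotProduct, Matrix.mulVec, Matrix.of_apply, Pi.star_apply,
        Fintype.sum_prod_type, Fin.sum_univ_two, Complex.star_def, map_sum,
        _root_.map_mul, Complex.conj_conj, Finset.mul_sum, Finset.sum_mul]
      norm_num
      ring
    rw [hform]
    exact (Matrix.posSemidef_iff_dotProduct_mulVec.mp hM).2 _

set_option maxHeartbeats 2000000 in
theorem stmt16 (t : ℂ) (h0 : t ≠ 0) (h1 : t ≠ 1) :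
    (ptB (rhoT t)).PosSemidef := by
  set r : ℝ := ‖t‖ with hr
  set s : ℝ := ‖t - 1‖ with hs
  -- scalar identities
  have habs : ((‖t ^ 2 - t‖ : ℝ) : ℂ) = (r : ℂ) * (s : ℂ) := by
    rw [hr, hs, show t ^ 2 - t = t * (t - 1) by ring, norm_mul]
    push_cast; ring
  have hc : t * (starRingEnd ℂ) t = (r : ℂ) * (r : ℂ) := by
    rw [Complex.mul_conj, hr]
    rw [show ((r:ℝ) : ℂ) * ((r:ℝ) : ℂ) = (((r : ℝ)^2 : ℝ) : ℂ) by push_cast; ring,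
      hr, Complex.sq_norm]
  -- triangle inequalities
  have hrpos : (0 : ℝ) ≤ r := norm_nonneg t
  have hspos : (0 : ℝ) ≤ s := norm_nonneg (t - 1)
  have tri1 : r ≤ s + 1 := by
    have := norm_add_le (t - 1) 1
    simpa [hr, hs] using this
  have tri2 : 1 ≤ r + s := by
    have := norm_add_le t (-(t - 1))
    simp only [norm_neg] at this
    have h2 : t + -(t - 1) = 1 := by ring
    rw [h2] at this
    simpa [hr, hs] using this
  have tri3 : s ≤ r + 1 := by
    have := norm_add_le t (-1)
    have h2 : t + -1 = t - 1 := by ring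
    rw [h2] at this
    simpa [hr, hs] using this
  -- real quadratic identities
  have hr2 : r ^ 2 = t.re ^ 2 + t.im ^ 2 := by
    rw [hr, Complex.sq_norm, Complex.normSq_apply]; ring
  have hs2 : s ^ 2 = r ^ 2 - 2 * t.re + 1 := by
    rw [hs, Complex.sq_norm, Complex.normSq_apply, hr2]
    simp [Complex.sub_re, Complex.sub_im]
    ring
  have hnsub : Complex.normSq (((r : ℝ) : ℂ) - t) = (r - t.re) ^ 2 + t.im ^ 2 := by
    simp [Complex.normSq_apply, Complex.sub_re, Complex.sub_im]
    ring
  have hnadd : Complex.normSq (((r : ℝ) : ℂ) + t) = (r + t.re) ^ 2 + t.im ^ 2 := by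
    simp [Complex.normSq_apply, Complex.add_re, Complex.add_im]
    ring
  have hnsq2 : Complex.normSq (2 : ℂ) = 4 := by
    norm_num [Complex.normSq_apply]
  -- nonnegativity of the diagonal entries
  have n1a : (0:ℝ) ≤ r * (s + 1 - r) / 2 := by
    have := mul_nonneg hrpos (show (0:ℝ) ≤ s + 1 - r by linarith); linarith
  have n1d : (0:ℝ) ≤ (r + s - 1) / 2 := by linarith
  have n2a : (0:ℝ) ≤ r * (s + r - 1) / 2 := by
    have := mul_nonneg hrpos (show (0:ℝ) ≤ s + r - 1 by linarith); linarith
  have n2d : (0:ℝ) ≤ (s - r + 1) / 2 := by linarith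
  have n3a : (0:ℝ) ≤ r * (1 + r + s) / 2 := by
    have := mul_nonneg hrpos (show (0:ℝ) ≤ 1 + r + s by linarith); linarith
  have n3d : (0:ℝ) ≤ (r + 1 - s) / 2 := by linarith
  have n4a : (0:ℝ) ≤ r * (1 + r - s) / 2 := by
    have := mul_nonneg hrpos (show (0:ℝ) ≤ 1 + r - s by linarith); linarith
  have n4d : (0:ℝ) ≤ (r + 1 + s) / 2 := by linarith
  -- determinant conditions
  have det1 : r * (s + 1 - r) / 2 * ((r + s - 1) / 2)
      = Complex.normSq ((((r:ℝ):ℂ) - t) / 2) := by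
    rw [map_div₀, hnsub, hnsq2]
    linear_combination (r/4) * hs2 + (1/4) * hr2
  have det2 : r * (s + r - 1) / 2 * ((s - r + 1) / 2)
      = Complex.normSq ((t - ((r:ℝ):ℂ)) / 2) := by
    have : Complex.normSq (t - ((r:ℝ):ℂ)) = (r - t.re) ^ 2 + t.im ^ 2 := by
      rw [← Complex.normSq_neg]
      rw [show -(t - ((r:ℝ):ℂ)) = ((r:ℝ):ℂ) - t by ring, hnsub]
    rw [map_div₀, this, hnsq2]
    linear_combination (r/4) * hs2 + (1/4) * hr2
  have det3 : r * (1 + r + s) / 2 * ((r + 1 - s) / 2)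
      = Complex.normSq ((((r:ℝ):ℂ) + t) / 2) := by
    rw [map_div₀, hnadd, hnsq2]
    linear_combination (-(r/4)) * hs2 + (1/4) * hr2
  have det4 : r * (1 + r - s) / 2 * ((r + 1 + s) / 2)
      = Complex.normSq ((((r:ℝ):ℂ) + t) / 2) := by
    rw [map_div₀, hnadd, hnsq2]
    linear_combination (-(r/4)) * hs2 + (1/4) * hr2
  -- the four PSD 2×2 matrices
  have P1 := psd2 _ _ _ n1a n1d det1
  have P2 := psd2 _ _ _ n2a n2d det2
  have P3 := psd2 _ _ _ n3a n3d det3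
  have P4 := psd2 _ _ _ n4a n4d det4
  have K1 := kron_psd _ P1 (phiv 0)
  have K2 := kron_psd _ P2 (phiv 1)
  have K3 := kron_psd _ P3 (phiv 2)
  have K4 := kron_psd _ P4 (phiv 3)
  have habs' : ((‖-t + t ^ 2‖ : ℝ) : ℂ) = (s : ℂ) * (r : ℂ) := by
    rw [show -t + t ^ 2 = t ^ 2 - t by ring, habs]; ring
  have hc' : t * (starRingEnd ℂ) t = ((r : ℝ) : ℂ) ^ 2 := by rw [hc]; ring
  have hdecomp : ptB (rhoT t) =
      (Matrix.of fun p q : Fin 2 × Fin 2 × Fin 2 =>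
        (!![((r * (s + 1 - r) / 2 : ℝ) : ℂ), (((r:ℝ):ℂ) - t) / 2;
            (starRingEnd ℂ) ((((r:ℝ):ℂ) - t) / 2), (((r + s - 1) / 2 : ℝ) : ℂ)]) p.1 q.1 *
          phiv 0 p.2 * (starRingEnd ℂ) (phiv 0 q.2)) +
      (Matrix.of fun p q : Fin 2 × Fin 2 × Fin 2 =>
        (!![((r * (s + r - 1) / 2 : ℝ) : ℂ), (t - ((r:ℝ):ℂ)) / 2;
            (starRingEnd ℂ) ((t - ((r:ℝ):ℂ)) / 2), (((s - r + 1) / 2 : ℝ) : ℂ)]) p.1 q.1 *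
          phiv 1 p.2 * (starRingEnd ℂ) (phiv 1 q.2)) +
      (Matrix.of fun p q : Fin 2 × Fin 2 × Fin 2 =>
        (!![((r * (1 + r + s) / 2 : ℝ) : ℂ), (((r:ℝ):ℂ) + t) / 2;
            (starRingEnd ℂ) ((((r:ℝ):ℂ) + t) / 2), (((r + 1 - s) / 2 : ℝ) : ℂ)]) p.1 q.1 *
          phiv 2 p.2 * (starRingEnd ℂ) (phiv 2 q.2)) +
      (Matrix.of fun p q : Fin 2 × Fin 2 × Fin 2 =>
        (!![((r * (1 + r - s) / 2 : ℝ) : ℂ), (((r:ℝ):ℂ) + t) / 2;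
            (starRingEnd ℂ) ((((r:ℝ):ℂ) + t) / 2), (((r + 1 + s) / 2 : ℝ) : ℂ)]) p.1 q.1 *
          phiv 3 p.2 * (starRingEnd ℂ) (phiv 3 q.2)) := by
    ext p q
    obtain ⟨p1, p2, p3⟩ := p
    obtain ⟨q1, q2, q3⟩ := q
    fin_cases p1 <;> fin_cases p2 <;> fin_cases p3 <;>
      fin_cases q1 <;> fin_cases q2 <;> fin_cases q3 <;>
    · simp only [ptB, rhoT, lam, evec, avecs, phiv, Matrix.sum_apply, Matrix.smul_apply,
        smul_eq_mul, vecMulVec_apply, Pi.star_apply, Complex.star_def, Fin.sum_univ_four,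
        Matrix.add_apply, Matrix.of_apply, map_div₀, map_sub, map_add, Complex.conj_ofReal,
        _root_.map_mul, _root_.map_one, map_zero, map_neg, map_ofNat, Matrix.cons_val', Matrix.cons_val_zero,
        Matrix.cons_val_one, Matrix.head_cons, Matrix.cons_val_two, Matrix.cons_val_three,
        Matrix.tail_cons, Matrix.head_fin_const, Matrix.cons_val_fin_one,
        Matrix.empty_val', Fin.isValue, Fin.mk_zero, Fin.mk_one]
      simp only [← hr, ← hs]
      push_cast
      first
      | ring1
      | linear_combination habs
      | linear_combination hc
      | linear_combination (-1 : ℂ) * hc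
      | linear_combination (-1 : ℂ) * habs
      | linear_combination habs'
      | linear_combination hc'
      | linear_combination (-1 : ℂ) * hc'
      | linear_combination (-1 : ℂ) * habs'
  rw [hdecomp]
  exact ((K1.add K2).add K3).add K4
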